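/- Let b > c > 1 and f(x) = x^{2b+c} + x^{b+c} + x^b + x^c + 1 over F_2 with m = 2b + c. For any polynomial D_0 = Σ_{i=0}^{2m-2} d_i x^i over F_2 of degree at most 2m - 2, the polynomial D_red = Σ_{i=0}^{2b+c-1} d_i x^i + Σ_{i=b+c}^{2b+c-1} d_{i+b} x^i + Σ_{i=c}^{b+c-1} d_{i+2b} x^i + Σ_{i=c}^{b+2c-2} d_{i+3b} x^i + Σ_{i=b}^{2b+c-1} d_{i+b+c} x^i + Σ_{i=0}^{b-1} d_{i+2b+c} x^i + Σ_{i=b+c}^{2b+c-2} d_{i+2b+c} x^i + Σ_{i=b}^{2b-2} d_{i+2b+2c} x^i + Σ_{i=0}^{c-1} d_{i+3b+c} x^i + Σ_{i=0}^{b-2} d_{i+3b+2c} x^i satisfies D_red ≡ D_0 (mod f) and deg D_red < m. -/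
import Mathlib
open Polynomial

noncomputable def TT (d : ℕ → ZMod 2) (a lo hi : ℕ) : Polynomial (ZMod 2) :=
  ∑ i ∈ Finset.Icc lo hi, C (d (i + a)) * X ^ i

lemma TT_shift (d : ℕ → ZMod 2) (a e lo hi : ℕ) (he : e ≤ a) :
    (X : Polynomial (ZMod 2)) ^ e * TT d a lo hi = TT d (a - e) (lo + e) (hi + e) := by
  unfold TT
  rw [Finset.mul_sum, ← Finset.map_add_right_Icc, Finset.sum_map]
  refine Finset.sum_congr rfl fun i _ => ?_
  simp only [addRightEmbedding_apply]
  rw [show i + e + (a - e) = i + a by omega]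
  ring

lemma TT_split (d : ℕ → ZMod 2) (a lo mid hi : ℕ) (hl : lo ≤ mid + 1) (hh : mid ≤ hi) :
    TT d a lo hi = TT d a lo mid + TT d a (mid + 1) hi := by
  unfold TT
  rw [← Finset.sum_union (by simp only [Finset.disjoint_left, Finset.mem_Icc]; omega)]
  exact Finset.sum_congr (by ext x; simp only [Finset.mem_Icc, Finset.mem_union]; omega)
    fun _ _ => rfl

lemma TT_deg (d : ℕ → ZMod 2) (a lo hi n : ℕ) (h : hi < n) :
    (TT d a lo hi).degree < (n : WithBot ℕ) := by
  unfold TT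
  refine lt_of_le_of_lt (Polynomial.degree_sum_le _ _) ?_
  refine (Finset.sup_lt_iff (WithBot.bot_lt_coe n)).mpr ?_
  intro i hi'
  refine lt_of_le_of_lt (Polynomial.degree_C_mul_X_pow_le _ _) ?_
  simp only [Finset.mem_Icc] at hi'
  exact Nat.cast_lt.mpr (Nat.lt_of_le_of_lt hi'.2 h)

lemma f_mul (d : ℕ → ZMod 2) (b c a lo hi : ℕ) (h : 2*b+c ≤ a) :
    ((X : Polynomial (ZMod 2)) ^ (2*b+c) + X ^ (b+c) + X ^ b + X ^ c + 1) * TT d a lo hi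
    = TT d (a-(2*b+c)) (lo+(2*b+c)) (hi+(2*b+c)) + TT d (a-(b+c)) (lo+(b+c)) (hi+(b+c))
      + TT d (a-b) (lo+b) (hi+b) + TT d (a-c) (lo+c) (hi+c) + TT d a lo hi := by
  rw [add_mul, add_mul, add_mul, add_mul, one_mul,
      TT_shift d a (2*b+c) lo hi (by omega), TT_shift d a (b+c) lo hi (by omega),
      TT_shift d a b lo hi (by omega), TT_shift d a c lo hi (by omega)]

theorem stmt11 (b c : ℕ) (h1 : c < b) (h2 : 1 < c) (d : ℕ → ZMod 2) :
    let m := 2*b+c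
    let f : Polynomial (ZMod 2) := X ^ (2*b+c) + X ^ (b+c) + X ^ b + X ^ c + 1
    let D0 : Polynomial (ZMod 2) := ∑ i ∈ Finset.range (2*m - 1), C (d i) * X ^ i
    let Dred : Polynomial (ZMod 2) :=
      (∑ i ∈ Finset.Icc 0 (2*b+c-1), C (d i) * X ^ i) +
      (∑ i ∈ Finset.Icc (b+c) (2*b+c-1), C (d (i+b)) * X ^ i) +
      (∑ i ∈ Finset.Icc c (b+c-1), C (d (i+2*b)) * X ^ i) +
      (∑ i ∈ Finset.Icc c (b+2*c-2), C (d (i+3*b)) * X ^ i) +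
      (∑ i ∈ Finset.Icc b (2*b+c-1), C (d (i+b+c)) * X ^ i) +
      (∑ i ∈ Finset.Icc 0 (b-1), C (d (i+2*b+c)) * X ^ i) +
      (∑ i ∈ Finset.Icc (b+c) (2*b+c-2), C (d (i+2*b+c)) * X ^ i) +
      (∑ i ∈ Finset.Icc b (2*b-2), C (d (i+2*b+2*c)) * X ^ i) +
      (∑ i ∈ Finset.Icc 0 (c-1), C (d (i+3*b+c)) * X ^ i) +
      (∑ i ∈ Finset.Icc 0 (b-2), C (d (i+3*b+2*c)) * X ^ i)
    f ∣ (Dred - D0) ∧ Dred.degree < ((m : ℕ) : WithBot ℕ) := by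
  intro m f D0 Dred
  have hm : m = 2*b+c := rfl
  have f_def : f = X ^ (2*b+c) + X ^ (b+c) + X ^ b + X ^ c + 1 := rfl
  have h2' : (2 : Polynomial (ZMod 2)) = 0 := by
    rw [← map_ofNat (C : ZMod 2 →+* Polynomial (ZMod 2)) 2,
        show (2 : ZMod 2) = 0 by decide, map_zero]
  have hDred : Dred = TT d 0 0 (2*b+c-1) + TT d b (b+c) (2*b+c-1) + TT d (2*b) c (b+c-1)
      + TT d (3*b) c (b+2*c-2) + TT d (b+c) b (2*b+c-1) + TT d (2*b+c) 0 (b-1)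
      + TT d (2*b+c) (b+c) (2*b+c-2) + TT d (2*b+2*c) b (2*b-2) + TT d (3*b+c) 0 (c-1)
      + TT d (3*b+2*c) 0 (b-2) := by
    unfold Dred
    unfold TT
    simp only [Nat.add_assoc, Nat.add_zero]
  have hD0 : D0 = TT d 0 0 (4*b+2*c-2) := by
    unfold D0 m
    unfold TT
    rw [show Finset.range (2*(2*b+c)-1) = Finset.Icc 0 (4*b+2*c-2) from by
      ext x; simp only [Finset.mem_range, Finset.mem_Icc]; omega]
    simp only [Nat.add_zero]
  have key : Dred + D0
      = f * (TT d (2*b+c) 0 (2*b+c-2) + TT d (3*b+c) 0 (b+c-2) + TT d (3*b+2*c) 0 (b-2)) := by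
    rw [hDred, hD0, f_def, mul_add, mul_add,
        f_mul d b c (2*b+c) 0 (2*b+c-2) (by omega),
        f_mul d b c (3*b+c) 0 (b+c-2) (by omega),
        f_mul d b c (3*b+2*c) 0 (b-2) (by omega)]
    rw [show 2*b+c-(2*b+c) = 0 by omega, show (0:ℕ)+(2*b+c) = 2*b+c by omega,
        show 2*b+c-2+(2*b+c) = 4*b+2*c-2 by omega,
        show 2*b+c-(b+c) = b by omega, show (0:ℕ)+(b+c) = b+c by omega,
        show 2*b+c-2+(b+c) = 3*b+2*c-2 by omega,
        show 2*b+c-b = b+c by omega, show (0:ℕ)+b = b by omega,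
        show 2*b+c-2+b = 3*b+c-2 by omega,
        show 2*b+c-c = 2*b by omega, show (0:ℕ)+c = c by omega,
        show 2*b+c-2+c = 2*b+2*c-2 by omega,
        show 3*b+c-(2*b+c) = b by omega, show b+c-2+(2*b+c) = 3*b+2*c-2 by omega,
        show 3*b+c-(b+c) = 2*b by omega, show b+c-2+(b+c) = 2*b+2*c-2 by omega,
        show 3*b+c-b = 2*b+c by omega, show b+c-2+b = 2*b+c-2 by omega,
        show 3*b+c-c = 3*b by omega, show b+c-2+c = b+2*c-2 by omega,
        show 3*b+2*c-(2*b+c) = b+c by omega, show b-2+(2*b+c) = 3*b+c-2 by omega,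
        show 3*b+2*c-(b+c) = 2*b+c by omega, show b-2+(b+c) = 2*b+c-2 by omega,
        show 3*b+2*c-b = 2*b+2*c by omega, show b-2+b = 2*b-2 by omega,
        show 3*b+2*c-c = 3*b+c by omega, show b-2+c = b+c-2 by omega]
    rw [TT_split d 0 0 (2*b+c-1) (4*b+2*c-2) (by omega) (by omega),
        TT_split d b (b+c) (2*b+c-1) (3*b+2*c-2) (by omega) (by omega),
        TT_split d (2*b) c (b+c-1) (2*b+2*c-2) (by omega) (by omega),
        TT_split d (b+c) b (2*b+c-1) (3*b+c-2) (by omega) (by omega),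
        TT_split d (2*b+c) 0 (b-1) (2*b+c-2) (by omega) (by omega),
        show b-1+1 = b by omega,
        TT_split d (2*b+c) b (b+c-1) (2*b+c-2) (by omega) (by omega),
        TT_split d (3*b+c) 0 (c-1) (b+c-2) (by omega) (by omega),
        show 2*b+c-1+1 = 2*b+c by omega, show b+c-1+1 = b+c by omega,
        show c-1+1 = c by omega]
    linear_combination (TT d 0 0 (2*b+c-1) - TT d b (2*b+c) (3*b+2*c-2)
      - TT d (2*b) (b+c) (2*b+2*c-2) - TT d (b+c) (2*b+c) (3*b+c-2)
      - TT d (2*b+c) b (b+c-1) - TT d (2*b+c) (b+c) (2*b+c-2)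
      - TT d (3*b+c) c (b+c-2)) * h2'
  constructor
  · refine ⟨TT d (2*b+c) 0 (2*b+c-2) + TT d (3*b+c) 0 (b+c-2) + TT d (3*b+2*c) 0 (b-2), ?_⟩
    have hneg : -D0 = D0 := by
      rw [neg_eq_iff_add_eq_zero, ← two_mul, h2', zero_mul]
    rw [sub_eq_add_neg, hneg, key]
  · rw [hDred]
    simp only [hm]
    have hdeg : ∀ (p q : Polynomial (ZMod 2)) (n : ℕ), p.degree < (n : WithBot ℕ) →
        q.degree < (n : WithBot ℕ) → (p + q).degree < (n : WithBot ℕ) :=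
      fun p q n hp hq => lt_of_le_of_lt (Polynomial.degree_add_le p q) (max_lt hp hq)
    exact hdeg _ _ _ (hdeg _ _ _ (hdeg _ _ _ (hdeg _ _ _ (hdeg _ _ _ (hdeg _ _ _ (hdeg _ _ _
      (hdeg _ _ _ (hdeg _ _ _ (TT_deg d _ _ _ _ (by omega)) (TT_deg d _ _ _ _ (by omega)))
      (TT_deg d _ _ _ _ (by omega))) (TT_deg d _ _ _ _ (by omega))) (TT_deg d _ _ _ _ (by omega)))
      (TT_deg d _ _ _ _ (by omega))) (TT_deg d _ _ _ _ (by omega))) (TT_deg d _ _ _ _ (by omega)))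
      (TT_deg d _ _ _ _ (by omega))) (TT_deg d _ _ _ _ (by omega))
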